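/- Let f_0(1)=1 and f_0(n)=0 for n>1, and let f_m be the m-th invert transform of f_0. Then for all m ≥ 1 and all 1 ≤ k ≤ n, the array c_m satisfies c_m(n,k) = Σ_{i=k}^{n} (m-1)^{i-k} · C(i-1, k-1) · c_1(n,i), where c_1(n,n)=1 and c_1(n,k)=0 for k<n, so in particular c_2(n,k) = C(n-1, k-1). -/

import Mathlib

/-- The invert transform: `invT g n = g n + ∑_{j=1}^{n-1} g j * invT g (n-j)`. -/
def invT (g : ℕ → ℤ) : ℕ → ℤ
  | n => g n + ∑ j ∈ (Finset.Ico 1 n).attach, g j.1 * invT g (n - j.1)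
decreasing_by
  have h := Finset.mem_Ico.mp j.2
  omega

/-- Compositions of `n` into `k` positive parts. -/
def comps (k n : ℕ) : Finset (Fin k → ℕ) :=
  (Finset.Nat.antidiagonalTuple k n).filter fun f => ∀ i, 0 < f i

/-- The `k`-fold convolution array of `g`:
sum over compositions of `n` into `k` positive parts of the products of values of `g`. -/
def compArr (g : ℕ → ℤ) (n k : ℕ) : ℤ :=
  ∑ f ∈ comps k n, ∏ i, g (f i)

open Finset

lemma comps_mem {k n : ℕ} {f : Fin k → ℕ} :
    f ∈ comps k n ↔ (∑ i, f i = n ∧ ∀ i, 0 < f i) := by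
  simp [comps, Finset.Nat.mem_antidiagonalTuple]

lemma comps_eq_empty {k n : ℕ} (h : n < k) : comps k n = ∅ := by
  ext f
  simp only [comps_mem, notMem_empty, iff_false, not_and]
  intro hs hp
  have h1 : (k : ℕ) = ∑ _i : Fin k, 1 := by simp
  have h2 : ∑ _i : Fin k, 1 ≤ ∑ i, f i := Finset.sum_le_sum fun i _ => hp i
  omega

lemma comps_one {n : ℕ} (hn : 1 ≤ n) : comps 1 n = {![n]} := by
  ext f
  simp only [comps_mem, mem_singleton]
  constructor
  · rintro ⟨hs, hp⟩
    funext i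
    fin_cases i
    simpa [Fin.sum_univ_one] using hs
  · rintro rfl
    refine ⟨by simp, fun i => ?_⟩
    fin_cases i
    simpa using Nat.lt_of_lt_of_le Nat.one_pos hn

lemma comps_card_succ (k n : ℕ) (hk : 1 ≤ k) :
    (comps (k+1) n).card = ∑ j ∈ Ico 1 n, (comps k (n - j)).card := by
  rw [← Finset.card_sigma]
  refine Finset.card_nbij' (fun f => ⟨f 0, Fin.tail f⟩)
    (fun p => Fin.cons p.1 p.2) ?_ ?_ ?_ ?_
  · intro f hf
    obtain ⟨hs, hp⟩ := comps_mem.mp hf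
    rw [Fin.sum_univ_succ] at hs
    have htk : (k : ℕ) = ∑ _i : Fin k, 1 := by simp
    have h2 : ∑ _i : Fin k, 1 ≤ ∑ i : Fin k, f i.succ :=
      Finset.sum_le_sum fun i _ => hp i.succ
    have hts : ∑ i : Fin k, Fin.tail f i = ∑ i : Fin k, f i.succ := rfl
    simp only [mem_coe, mem_sigma, mem_Ico]
    refine ⟨⟨hp 0, by omega⟩, comps_mem.mpr ⟨by omega, fun (i : Fin k) => hp i.succ⟩⟩
  · intro p hp
    simp only [mem_coe, mem_sigma, mem_Ico] at hp
    obtain ⟨⟨h1, h2⟩, h3⟩ := hp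
    obtain ⟨hs, hpos⟩ := comps_mem.mp h3
    refine comps_mem.mpr ⟨?_, fun i => ?_⟩
    · rw [Fin.sum_univ_succ]
      simp only [Fin.cons_zero, Fin.cons_succ]
      omega
    · cases i using Fin.cases with
      | zero => simpa using Nat.lt_of_lt_of_le Nat.one_pos h1
      | succ i => simpa using hpos i
  · intro f _; exact Fin.cons_self_tail f
  · intro p _; simp

lemma card_comps : ∀ k n : ℕ, 1 ≤ k → k ≤ n → (comps k n).card = (n-1).choose (k-1) := by
  intro k
  induction k with
  | zero => omega
  | succ k ih =>
    intro n _ hkn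
    rcases Nat.eq_zero_or_pos k with rfl | hk
    · rw [comps_one (by omega)]
      simp
    · rw [comps_card_succ k n hk]
      have h1 : ∀ j ∈ Ico 1 n, (comps k (n - j)).card
          = if j ∈ Ico 1 (n - k + 1) then (n - j - 1).choose (k-1) else 0 := by
        intro j hj
        obtain ⟨hj1, hj2⟩ := mem_Ico.mp hj
        by_cases hle : j ≤ n - k
        · rw [if_pos (mem_Ico.mpr ⟨hj1, by omega⟩), ih (n - j) hk (by omega)]
        · rw [if_neg (by simp [mem_Ico]; omega), comps_eq_empty (by omega), card_empty]
      rw [Finset.sum_congr rfl h1, Finset.sum_ite_mem, Finset.inter_eq_right.mpr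
        (Finset.Ico_subset_Ico le_rfl (by omega))]
      have h2 : ∑ j ∈ Ico 1 (n - k + 1), (n - j - 1).choose (k-1)
          = ∑ i ∈ Icc (k-1) (n-2), i.choose (k-1) := by
        refine Finset.sum_nbij' (fun j => n - j - 1) (fun i => n - i - 1) ?_ ?_ ?_ ?_ ?_ <;>
          intros <;> simp_all [mem_Ico, mem_Icc] <;> omega
      rw [h2, Nat.sum_Icc_choose]
      congr 1 <;> omega

lemma compArr_pow (t : ℤ) (g : ℕ → ℤ) (hg : ∀ i, 1 ≤ i → g i = t ^ (i - 1))
    (n k : ℕ) (hk : 1 ≤ k) (hkn : k ≤ n) :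
    compArr g n k = t ^ (n - k) * ((n-1).choose (k-1) : ℤ) := by
  unfold compArr
  have h1 : ∀ f ∈ comps k n, ∏ i, g (f i) = t ^ (n - k) := by
    intro f hf
    obtain ⟨hs, hp⟩ := comps_mem.mp hf
    have h2 : ∏ i, g (f i) = ∏ i, t ^ (f i - 1) :=
      Finset.prod_congr rfl fun i _ => hg _ (hp i)
    rw [h2, Finset.prod_pow_eq_pow_sum]
    congr 1
    have h3 : ∑ i : Fin k, f i = ∑ i : Fin k, ((f i - 1) + 1) :=
      Finset.sum_congr rfl fun i _ => by have := hp i; omega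
    rw [Finset.sum_add_distrib] at h3
    simp only [Finset.sum_const, card_univ, Fintype.card_fin, smul_eq_mul, mul_one] at h3
    omega
  rw [Finset.sum_congr rfl h1, Finset.sum_const, card_comps k n hk hkn,
    nsmul_eq_mul, mul_comm]

lemma invT_pow (t : ℤ) (g : ℕ → ℤ) (hg : ∀ i, 1 ≤ i → g i = t ^ (i - 1)) :
    ∀ n, 1 ≤ n → invT g n = (t + 1) ^ (n - 1) := by
  intro n
  induction n using Nat.strong_induction_on with
  | _ n ih =>
    intro hn
    rw [invT, Finset.sum_attach (Ico 1 n) (fun j => g j * invT g (n - j))]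
    have h1 : ∀ j ∈ Ico 1 n, g j * invT g (n - j) = t ^ (j-1) * (t+1) ^ (n-1-1-(j-1)) := by
      intro j hj
      obtain ⟨h1, h2⟩ := mem_Ico.mp hj
      rw [hg j h1, ih (n - j) (by omega) (by omega)]
      congr 2
      omega
    rw [Finset.sum_congr rfl h1, hg n hn]
    have h2 : ∑ j ∈ Ico 1 n, t ^ (j-1) * (t+1) ^ (n-1-1-(j-1))
        = ∑ i ∈ range (n-1), t ^ i * (t+1) ^ (n-1-1-i) := by
      refine Finset.sum_nbij' (fun j => j - 1) (fun i => i + 1) ?_ ?_ ?_ ?_ ?_ <;>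
        intros <;> simp_all [mem_Ico, mem_range] <;> omega
    rw [h2]
    have key := geom_sum₂_mul t (t+1) (n-1)
    rw [show t - (t+1) = -1 by ring] at key
    linarith [key]

lemma iter_pow (f0 : ℕ → ℤ) (hf0 : f0 1 = 1 ∧ ∀ i > 1, f0 i = 0) :
    ∀ m, 1 ≤ m → ∀ i, 1 ≤ i → invT^[m-1] f0 i = ((m : ℤ) - 1) ^ (i - 1) := by
  intro m
  induction m with
  | zero => omega
  | succ m ih =>
    intro _ i hi
    rcases Nat.eq_zero_or_pos m with rfl | hm
    · simp only [Nat.sub_self, Function.iterate_zero, id_eq]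
      rcases Nat.eq_or_lt_of_le hi with h | h
      · rw [← h, hf0.1]; simp
      · rw [hf0.2 i h, Nat.cast_one, sub_self, zero_pow (by omega)]
    · have hs : m + 1 - 1 = (m - 1) + 1 := by omega
      rw [hs, Function.iterate_succ_apply']
      rw [invT_pow ((m : ℤ) - 1) _ (ih hm) i hi]
      congr 1
      push_cast
      ring

theorem stmt5 (m n k : ℕ) (hm : 1 ≤ m) (hk : 1 ≤ k) (hkn : k ≤ n)
    (f0 : ℕ → ℤ) (hf0 : f0 1 = 1 ∧ ∀ i > 1, f0 i = 0) :
    compArr f0 n n = 1 ∧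
    (k < n → compArr f0 n k = 0) ∧
    compArr (invT^[m - 1] f0) n k =
      ∑ i ∈ Finset.Icc k n, ((m : ℤ) - 1) ^ (i - k) * ((i - 1).choose (k - 1)) * compArr f0 n i ∧
    compArr (invT f0) n k = ((n - 1).choose (k - 1) : ℤ) := by
  have hg0 : ∀ i, 1 ≤ i → f0 i = (0 : ℤ) ^ (i - 1) := by
    intro i hi
    rcases Nat.eq_or_lt_of_le hi with h | h
    · rw [← h, hf0.1]; simp
    · rw [hf0.2 i h, zero_pow (by omega)]
  have hA : ∀ j, 1 ≤ j → j ≤ n → compArr f0 n j = (0:ℤ) ^ (n - j) * ((n-1).choose (j-1) : ℤ) :=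
    fun j h1 h2 => compArr_pow 0 f0 hg0 n j h1 h2
  have h1 : compArr f0 n n = 1 := by
    rw [hA n (le_trans hk hkn) le_rfl]
    simp
  have h2 : ∀ j, 1 ≤ j → j < n → compArr f0 n j = 0 := by
    intro j hj1 hj2
    rw [hA j hj1 (le_of_lt hj2), zero_pow (by omega), zero_mul]
  refine ⟨h1, fun h => h2 k hk h, ?_, ?_⟩
  · rw [compArr_pow ((m : ℤ) - 1) _ (iter_pow f0 hf0 m hm) n k hk hkn]
    rw [Finset.sum_eq_single_of_mem n (Finset.mem_Icc.mpr ⟨hkn, le_rfl⟩)]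
    · rw [h1, mul_one]
    · intro b hb hbn
      obtain ⟨hb1, hb2⟩ := Finset.mem_Icc.mp hb
      rw [h2 b (le_trans hk hb1) (lt_of_le_of_ne hb2 hbn), mul_zero]
  · have hg1 : ∀ i, 1 ≤ i → invT f0 i = (1 : ℤ) ^ (i - 1) := by
      intro i hi
      have := iter_pow f0 hf0 2 (by norm_num) i hi
      norm_num at this
      simpa using this
    rw [compArr_pow 1 _ hg1 n k hk hkn, one_pow, one_mul]
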